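/- If T1 := p_w·b_w + (1−p_w)·μ*, T2 := p*·b* + (1−p*)·p_w·b_w, T3 := μ* where μ* = p*·b* + (1−p*)·a*, and MAX := p*·b* + (1−p*)·p_w·b_w + (1−p*)(1−p_w)·a*, with parameters satisfying 0 ≤ p*, p_w ≤ 1, 0 ≤ a* ≤ b_w ≤ b*, then max(T1, T2, T3) ≥ (4/5)·MAX. -/
import Mathlib

theorem stmt15 (ps pw as bw bs : ℝ)
    (hps0 : 0 ≤ ps) (hps1 : ps ≤ 1) (hpw0 : 0 ≤ pw) (hpw1 : pw ≤ 1)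
    (has : 0 ≤ as) (habw : as ≤ bw) (hbwbs : bw ≤ bs)
    (μs T1 T2 T3 MAX : ℝ)
    (hμ : μs = ps * bs + (1 - ps) * as)
    (hT1 : T1 = pw * bw + (1 - pw) * μs)
    (hT2 : T2 = ps * bs + (1 - ps) * (pw * bw))
    (hT3 : T3 = μs)
    (hMAX : MAX = ps * bs + (1 - ps) * (pw * bw) + (1 - ps) * (1 - pw) * as) :
    (4 / 5) * MAX ≤ max (max T1 T2) T3 := by
  by_contra hc
  push_neg at hc
  have h1 : T1 < 4/5 * MAX := lt_of_le_of_lt (le_trans (le_max_left _ _) (le_max_left _ _)) hc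
  have h2 : T2 < 4/5 * MAX := lt_of_le_of_lt (le_trans (le_max_right _ _) (le_max_left _ _)) hc
  have h3 : T3 < 4/5 * MAX := lt_of_le_of_lt (le_max_right _ _) hc
  subst hμ hT1 hT2 hT3 hMAX
  set M : ℝ := ps * bs + (1 - ps) * (pw * bw) + (1 - ps) * (1 - pw) * as with hMdef
  have hbw0 : 0 ≤ bw := le_trans has habw
  have hbs0 : 0 ≤ bs := le_trans hbw0 hbwbs
  have hM0 : 0 ≤ M := by
    have := mul_nonneg hps0 hbs0
    have := mul_nonneg (sub_nonneg.2 hps1) (mul_nonneg hpw0 hbw0)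
    have := mul_nonneg (mul_nonneg (sub_nonneg.2 hps1) (sub_nonneg.2 hpw1)) has
    linarith
  have a1 : M < 5 * (ps*pw*(bs-bw)) := by nlinarith
  have a2 : M < 5 * ((1-ps)*(1-pw)*as) := by nlinarith
  have a3 : M < 5 * ((1-ps)*pw*(bw-as)) := by nlinarith
  rcases eq_or_lt_of_le hM0 with hM | hM
  · -- M = 0 : then A2 ≤ M gives contradiction with a2
    nlinarith [mul_nonneg hps0 hbs0, mul_nonneg (sub_nonneg.2 hps1) (mul_nonneg hpw0 hbw0),
      mul_nonneg (mul_nonneg (sub_nonneg.2 hps1) (sub_nonneg.2 hpw1)) has,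
      mul_nonneg (mul_nonneg (sub_nonneg.2 hps1) hpw0) (sub_nonneg.2 habw),
      mul_nonneg (mul_nonneg hps0 hpw0) (sub_nonneg.2 hbwbs)]
  · have hpw : 0 < pw := by
      by_contra h
      push_neg at h
      have hpw0' : pw = 0 := le_antisymm h hpw0
      rw [hpw0'] at a1; nlinarith
    have h1w : 0 < 1 - pw := by
      by_contra h
      push_neg at h
      have : pw = 1 := le_antisymm hpw1 (by linarith)
      rw [this] at a2; nlinarith
    nlinarith [mul_pos h1w (sub_pos.2 a1), mul_pos hpw (sub_pos.2 a2),
      mul_pos (mul_pos hpw h1w) (sub_pos.2 a3),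
      mul_nonneg (mul_nonneg (mul_nonneg hpw0 (sub_nonneg.2 hpw1)) hps0) hbw0,
      mul_nonneg hM0 (sq_nonneg (2*pw - 1))]
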